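/- Suppose A_3 and A_4 are symmetric 4v×4v matrices satisfying A_3² = A_4² = k A_0 + c A_2 and A_3A_4 = A_4A_3 = k A_1 + c A_2, where A_0 = I_{4v}, A_1 = diag(P⊗I_v, P⊗I_v), A_2 = diag(J_2⊗(J_v−I_v), J_2⊗(J_v−I_v)), and c = k(k−1)/(2(v−1)). If A_3 = antidiag([[W_1, W_2],[W_2, W_1]]) and A_4 = antidiag([[W_2, W_1],[W_1, W_2]]) in the block form of the paper for some v×v (0,1)-matrices W_1, W_2, then (W_1 − W_2)(W_1 − W_2)ᵀ = k I_v and (W_1 + W_2)(W_1 + W_2)ᵀ = (k − λ) I_v + λ J_v with λ = k(k−1)/(v−1). -/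

import Mathlib

open Matrix Kronecker

namespace BGWScheme

def P : Matrix (Fin 2) (Fin 2) ℚ := !![0, 1; 1, 0]

def J2 : Matrix (Fin 2) (Fin 2) ℚ := Matrix.of fun _ _ => 1

def Jv (v : ℕ) : Matrix (Fin v) (Fin v) ℚ := Matrix.of fun _ _ => 1

/-- Index set for the `4v × 4v` matrices of the scheme. -/
abbrev Idx (v : ℕ) := (Fin 2 × Fin v) ⊕ (Fin 2 × Fin v)

def A0 (v : ℕ) : Matrix (Idx v) (Idx v) ℚ := 1

def A1 (v : ℕ) : Matrix (Idx v) (Idx v) ℚ :=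
  Matrix.fromBlocks (P ⊗ₖ (1 : Matrix (Fin v) (Fin v) ℚ)) 0 0
    (P ⊗ₖ (1 : Matrix (Fin v) (Fin v) ℚ))

def A2 (v : ℕ) : Matrix (Idx v) (Idx v) ℚ :=
  Matrix.fromBlocks (J2 ⊗ₖ (Jv v - 1)) 0 0 (J2 ⊗ₖ (Jv v - 1))

def A3 (v : ℕ) (W1 W2 : Matrix (Fin v) (Fin v) ℚ) : Matrix (Idx v) (Idx v) ℚ :=
  Matrix.fromBlocks 0 ((1 : Matrix (Fin 2) (Fin 2) ℚ) ⊗ₖ W1 + P ⊗ₖ W2)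
    ((1 : Matrix (Fin 2) (Fin 2) ℚ) ⊗ₖ W1ᵀ + P ⊗ₖ W2ᵀ) 0

def A4 (v : ℕ) (W1 W2 : Matrix (Fin v) (Fin v) ℚ) : Matrix (Idx v) (Idx v) ℚ :=
  Matrix.fromBlocks 0 ((1 : Matrix (Fin 2) (Fin 2) ℚ) ⊗ₖ W2 + P ⊗ₖ W1)
    ((1 : Matrix (Fin 2) (Fin 2) ℚ) ⊗ₖ W2ᵀ + P ⊗ₖ W1ᵀ) 0

def A5 (v : ℕ) (W1 W2 : Matrix (Fin v) (Fin v) ℚ) : Matrix (Idx v) (Idx v) ℚ :=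
  Matrix.fromBlocks 0 (J2 ⊗ₖ (Jv v - W1 - W2)) (J2 ⊗ₖ (Jv v - W1ᵀ - W2ᵀ)) 0

lemma P_mul_P : P * P = 1 := by
  ext i j
  fin_cases i <;> fin_cases j <;>
    simp [P, Matrix.mul_apply, Fin.sum_univ_two, Matrix.one_apply]

lemma J2_eq : J2 = 1 + P := by
  ext i j
  fin_cases i <;> fin_cases j <;> simp [J2, P, Matrix.one_apply]

/-- Separate the `1 ⊗ₖ` and `P ⊗ₖ` components. -/
lemma kron_sep {v : ℕ} (S T S' T' : Matrix (Fin v) (Fin v) ℚ)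
    (h : (1 : Matrix (Fin 2) (Fin 2) ℚ) ⊗ₖ S + P ⊗ₖ T
       = (1 : Matrix (Fin 2) (Fin 2) ℚ) ⊗ₖ S' + P ⊗ₖ T') :
    S = S' ∧ T = T' := by
  constructor <;> ext i j
  · have := congrFun (congrFun h (0, i)) (0, j)
    simpa [P, Matrix.kroneckerMap_apply, Matrix.one_apply] using this
  · have := congrFun (congrFun h (0, i)) (1, j)
    simpa [P, Matrix.kroneckerMap_apply, Matrix.one_apply] using this

/-- Conversely, if the block matrices `A₃`, `A₄` built from `(0,1)`-matrices
`W₁, W₂` satisfy `A₃² = A₄² = k A₀ + c A₂` and `A₃A₄ = A₄A₃ = k A₁ + c A₂`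
with `c = k(k−1)/(2(v−1))`, then `(W₁−W₂)(W₁−W₂)ᵀ = k I` and
`(W₁+W₂)(W₁+W₂)ᵀ = (k−λ) I + λ J` with `λ = k(k−1)/(v−1)`. -/
theorem scheme_to_balanced_weighing (v : ℕ) (hv : 1 < v) (k : ℚ)
    (W1 W2 : Matrix (Fin v) (Fin v) ℚ)
    (h01a : ∀ x y, W1 x y = 0 ∨ W1 x y = 1)
    (h01b : ∀ x y, W2 x y = 0 ∨ W2 x y = 1)
    (h33 : A3 v W1 W2 * A3 v W1 W2
      = k • A0 v + (k * (k - 1) / (2 * ((v : ℚ) - 1))) • A2 v)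
    (h44 : A4 v W1 W2 * A4 v W1 W2
      = k • A0 v + (k * (k - 1) / (2 * ((v : ℚ) - 1))) • A2 v)
    (h34 : A3 v W1 W2 * A4 v W1 W2
      = k • A1 v + (k * (k - 1) / (2 * ((v : ℚ) - 1))) • A2 v)
    (h43 : A4 v W1 W2 * A3 v W1 W2
      = k • A1 v + (k * (k - 1) / (2 * ((v : ℚ) - 1))) • A2 v) :
    (W1 - W2) * (W1 - W2)ᵀ = k • (1 : Matrix (Fin v) (Fin v) ℚ) ∧
    (W1 + W2) * (W1 + W2)ᵀ
      = (k - k * (k - 1) / ((v : ℚ) - 1)) • (1 : Matrix (Fin v) (Fin v) ℚ)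
        + (k * (k - 1) / ((v : ℚ) - 1)) • Jv v := by
  set c : ℚ := k * (k - 1) / (2 * ((v : ℚ) - 1)) with hc
  -- extract the top-left block equation from h33
  have hblock :
      ((1 : Matrix (Fin 2) (Fin 2) ℚ) ⊗ₖ W1 + P ⊗ₖ W2)
        * ((1 : Matrix (Fin 2) (Fin 2) ℚ) ⊗ₖ W1ᵀ + P ⊗ₖ W2ᵀ)
      = k • (1 : Matrix (Fin 2 × Fin v) (Fin 2 × Fin v) ℚ)
        + c • (J2 ⊗ₖ (Jv v - 1)) := by
    have h := congrArg Matrix.toBlocks₁₁ h33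
    rw [A3, A0, A2, Matrix.fromBlocks_multiply, ← Matrix.fromBlocks_one,
      Matrix.fromBlocks_smul, Matrix.fromBlocks_smul,
      Matrix.fromBlocks_add, Matrix.toBlocks_fromBlocks₁₁,
      Matrix.toBlocks_fromBlocks₁₁] at h
    simpa using h
  -- rewrite both sides in the form 1 ⊗ S + P ⊗ T
  have hL :
      ((1 : Matrix (Fin 2) (Fin 2) ℚ) ⊗ₖ W1 + P ⊗ₖ W2)
        * ((1 : Matrix (Fin 2) (Fin 2) ℚ) ⊗ₖ W1ᵀ + P ⊗ₖ W2ᵀ)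
      = (1 : Matrix (Fin 2) (Fin 2) ℚ) ⊗ₖ (W1 * W1ᵀ + W2 * W2ᵀ)
        + P ⊗ₖ (W1 * W2ᵀ + W2 * W1ᵀ) := by
    simp only [add_mul, mul_add, ← Matrix.mul_kronecker_mul, P_mul_P, one_mul,
      mul_one, Matrix.kronecker_add]
    abel
  have hR :
      k • (1 : Matrix (Fin 2 × Fin v) (Fin 2 × Fin v) ℚ)
        + c • (J2 ⊗ₖ (Jv v - 1))
      = (1 : Matrix (Fin 2) (Fin 2) ℚ) ⊗ₖ (k • (1 : Matrix (Fin v) (Fin v) ℚ)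
            + c • (Jv v - 1))
        + P ⊗ₖ (c • (Jv v - 1)) := by
    ext ⟨a, i⟩ ⟨b, j⟩
    fin_cases a <;> fin_cases b <;>
      simp [P, J2, Jv, Matrix.kroneckerMap_apply, Matrix.one_apply,
        Matrix.smul_apply, Matrix.sub_apply, Matrix.add_apply,
        Prod.ext_iff] <;> ring
  rw [hL, hR] at hblock
  obtain ⟨hS, hT⟩ := kron_sep _ _ _ _ hblock
  have hv1 : ((v : ℚ) - 1) ≠ 0 := by
    have : (1 : ℚ) < (v : ℚ) := by exact_mod_cast hv
    linarith
  have h2c : 2 * c = k * (k - 1) / ((v : ℚ) - 1) := by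
    rw [hc]; field_simp
  constructor
  · have : (W1 - W2) * (W1 - W2)ᵀ
        = (W1 * W1ᵀ + W2 * W2ᵀ) - (W1 * W2ᵀ + W2 * W1ᵀ) := by
      rw [Matrix.transpose_sub]
      noncomm_ring
    rw [this, hS, hT]
    abel
  · have : (W1 + W2) * (W1 + W2)ᵀ
        = (W1 * W1ᵀ + W2 * W2ᵀ) + (W1 * W2ᵀ + W2 * W1ᵀ) := by
      rw [Matrix.transpose_add]
      noncomm_ring
    rw [this, hS, hT, ← h2c]
    module

end BGWScheme
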